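/- Any nonzero subrepresentation N ⊆ M satisfies μ(N) ≤ μ(M₁), where M₁ is the first step of the Harder-Narasimhan filtration of M (the maximal destabilizing subrepresentation); and if μ(N) = μ(M₁) then N ⊆ M₁. -/

import Mathlib

open Finset

/-- A subrepresentation of a fixed representation `M` of a quiver with vertex set `V`,
arrow set `E`, source/target maps `src tgt : E → V` and structure maps `f`. -/
structure Subrep {k V E : Type} [Field k] (M : V → Type) [∀ v, AddCommGroup (M v)]
    [∀ v, Module k (M v)] (src tgt : E → V) (f : ∀ e, M (src e) →ₗ[k] M (tgt e)) : Type where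
  N : ∀ v, Submodule k (M v)
  compat : ∀ e, (N (src e)).map (f e) ≤ N (tgt e)

namespace Subrep

variable {k V E : Type} [Field k] [Fintype V] {M : V → Type}
  [∀ v, AddCommGroup (M v)] [∀ v, Module k (M v)] [∀ v, FiniteDimensional k (M v)]
  {src tgt : E → V} {f : ∀ e, M (src e) →ₗ[k] M (tgt e)}

instance : PartialOrder (Subrep M src tgt f) :=
  PartialOrder.lift Subrep.N (fun A B h => by cases A; cases B; simpa using h)

/-- The zero subrepresentation. -/
def bot : Subrep M src tgt f := ⟨fun _ => ⊥, fun e => by simp⟩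

/-- The whole representation `M` as a subrepresentation of itself. -/
def top : Subrep M src tgt f := ⟨fun _ => ⊤, fun e => le_top⟩

/-- Sum of two subrepresentations. -/
def sup (A B : Subrep M src tgt f) : Subrep M src tgt f :=
  ⟨fun v => A.N v ⊔ B.N v, fun e => by
    rw [Submodule.map_sup]
    exact sup_le_sup (A.compat e) (B.compat e)⟩

/-- `tot c A = ∑_v c_v · dim A_v`; gives `Θ(A)` resp. `σ(A)` for `c = Θ` resp. `σ`. -/
noncomputable def tot (c : V → ℤ) (A : Subrep M src tgt f) : ℤ :=
  ∑ v, c v * (Module.finrank k (A.N v) : ℤ)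

/-- The slope `μ(A) = Θ(A)/σ(A)` as a rational number. -/
noncomputable def slope (Θ σ : V → ℤ) (A : Subrep M src tgt f) : ℚ :=
  (tot Θ A : ℚ) / (tot σ A : ℚ)

/-- The slope of the quotient `B/A` for `A ≤ B`. -/
noncomputable def quotSlope (Θ σ : V → ℤ) (A B : Subrep M src tgt f) : ℚ :=
  ((tot Θ B - tot Θ A : ℤ) : ℚ) / ((tot σ B - tot σ A : ℤ) : ℚ)

/-- `(Θ,σ)`-semistability of the subrepresentation `A`, viewed as a representation itself:
every nonzero proper subrepresentation of `A` has slope at most `μ(A)`. -/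
def Semistable (Θ σ : V → ℤ) (A : Subrep M src tgt f) : Prop :=
  ∀ B : Subrep M src tgt f, B ≤ A → B ≠ bot → B ≠ A → slope Θ σ B ≤ slope Θ σ A

/-- `(Θ,σ)`-semistability of the quotient representation `B/A`, expressed via the
correspondence between subrepresentations of `B/A` and subrepresentations `P` with
`A ≤ P ≤ B`. -/
def QuotSemistable (Θ σ : V → ℤ) (A B : Subrep M src tgt f) : Prop :=
  ∀ P : Subrep M src tgt f, A ≤ P → P ≤ B → P ≠ A → quotSlope Θ σ A P ≤ quotSlope Θ σ A B

/-- `F` (indexed by `ℕ`, constant equal to `⊤` from `n+1` on) is a Harder–Narasimhan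
filtration `0 = F 0 ⊂ F 1 ⊂ ⋯ ⊂ F (n+1) = M` : successive quotients have strictly
decreasing slopes and are `(Θ,σ)`-semistable. -/
def IsHNFiltration (Θ σ : V → ℤ) (n : ℕ) (F : ℕ → Subrep M src tgt f) : Prop :=
  F 0 = bot ∧ (∀ i, n + 1 ≤ i → F i = top) ∧
  (∀ i ≤ n, F i < F (i+1)) ∧
  (∀ i, i + 1 ≤ n → quotSlope Θ σ (F (i+1)) (F (i+2)) < quotSlope Θ σ (F i) (F (i+1))) ∧
  (∀ i ≤ n, QuotSemistable Θ σ (F i) (F (i+1)))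

end Subrep

namespace Subrep

variable {k V E : Type} [Field k] [Fintype V] {M : V → Type}
  [∀ v, AddCommGroup (M v)] [∀ v, Module k (M v)] [∀ v, FiniteDimensional k (M v)]
  {src tgt : E → V} {f : ∀ e, M (src e) →ₗ[k] M (tgt e)}

/-- Intersection of two subrepresentations. -/
def inf' (A B : Subrep M src tgt f) : Subrep M src tgt f :=
  ⟨fun v => A.N v ⊓ B.N v, fun e => le_inf
    ((Submodule.map_mono inf_le_left).trans (A.compat e))
    ((Submodule.map_mono inf_le_right).trans (B.compat e))⟩

lemma le_def' {A B : Subrep M src tgt f} : A ≤ B ↔ ∀ v, A.N v ≤ B.N v := Iff.rfl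

lemma ext' {A B : Subrep M src tgt f} (h : ∀ v, A.N v = B.N v) : A = B := by
  cases A; cases B; congr; exact funext h

lemma bot_le' (A : Subrep M src tgt f) : (bot : Subrep M src tgt f) ≤ A :=
  le_def'.2 fun v => bot_le

lemma inf'_le_left (A B : Subrep M src tgt f) : inf' A B ≤ A :=
  le_def'.2 fun v => inf_le_left

lemma inf'_le_right (A B : Subrep M src tgt f) : inf' A B ≤ B :=
  le_def'.2 fun v => inf_le_right

lemma le_inf' {A B C : Subrep M src tgt f} (h1 : A ≤ B) (h2 : A ≤ C) : A ≤ inf' B C :=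
  le_def'.2 fun v => le_inf (h1 v) (h2 v)

lemma le_sup_right' (A B : Subrep M src tgt f) : B ≤ sup A B :=
  le_def'.2 fun v => le_sup_right

lemma le_sup_left' (A B : Subrep M src tgt f) : A ≤ sup A B :=
  le_def'.2 fun v => le_sup_left

lemma sup_le' {A B C : Subrep M src tgt f} (h1 : A ≤ C) (h2 : B ≤ C) : sup A B ≤ C :=
  le_def'.2 fun v => sup_le (h1 v) (h2 v)

lemma inf'_mono_right {A : Subrep M src tgt f} {B C : Subrep M src tgt f} (h : B ≤ C) :
    inf' A B ≤ inf' A C :=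
  le_inf' (inf'_le_left A B) ((inf'_le_right A B).trans h)

variable (Θ σ : V → ℤ)

lemma tot_bot : tot σ (bot : Subrep M src tgt f) = 0 := by
  unfold tot
  refine Finset.sum_eq_zero fun v _ => ?_
  have h0 : Module.finrank k ((bot : Subrep M src tgt f).N v) = 0 := finrank_bot k (M v)
  simp [h0]

lemma inf'_bot (A : Subrep M src tgt f) : inf' A bot = bot :=
  ext' fun v => by simp [inf', bot]

lemma tot_inf'_bot (A : Subrep M src tgt f) : tot σ (inf' A bot) = 0 := by
  rw [inf'_bot, tot_bot]

lemma inf'_top (A : Subrep M src tgt f) : inf' A top = A :=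
  ext' fun v => by simp [inf', top]

lemma tot_mono (hσ : ∀ v, 0 < σ v) {A B : Subrep M src tgt f} (h : A ≤ B) :
    tot σ A ≤ tot σ B := by
  refine Finset.sum_le_sum fun v _ => ?_
  have := Submodule.finrank_mono (le_def'.1 h v)
  exact mul_le_mul_of_nonneg_left (by exact_mod_cast this) (hσ v).le

lemma tot_lt (hσ : ∀ v, 0 < σ v) {A B : Subrep M src tgt f} (h : A ≤ B) (hne : A ≠ B) :
    tot σ A < tot σ B := by
  have hv : ∃ v, A.N v ≠ B.N v := by
    by_contra hc
    push_neg at hc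
    exact hne (ext' hc)
  obtain ⟨v, hv⟩ := hv
  refine Finset.sum_lt_sum (fun w _ => mul_le_mul_of_nonneg_left
    (by exact_mod_cast Submodule.finrank_mono (le_def'.1 h w)) (hσ w).le) ⟨v, Finset.mem_univ v, ?_⟩
  have : A.N v < B.N v := lt_of_le_of_ne (le_def'.1 h v) hv
  have := Submodule.finrank_lt_finrank_of_lt this
  exact mul_lt_mul_of_pos_left (by exact_mod_cast this) (hσ v)

lemma tot_nonneg (hσ : ∀ v, 0 < σ v) (A : Subrep M src tgt f) : 0 ≤ tot σ A := by
  have h := tot_mono σ hσ (bot_le' A)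
  rwa [tot_bot] at h

lemma tot_modular (A B : Subrep M src tgt f) :
    tot σ (A.sup B) + tot σ (A.inf' B) = tot σ A + tot σ B := by
  unfold tot
  rw [← Finset.sum_add_distrib, ← Finset.sum_add_distrib]
  refine Finset.sum_congr rfl fun v _ => ?_
  have := Submodule.finrank_sup_add_finrank_inf_eq (A.N v) (B.N v)
  have h2 : ((Module.finrank k ((A.sup B).N v) : ℤ) + (Module.finrank k ((A.inf' B).N v) : ℤ))
      = (Module.finrank k (A.N v) : ℤ) + (Module.finrank k (B.N v) : ℤ) := by
    show ((Module.finrank k ↥(A.N v ⊔ B.N v) : ℤ) + (Module.finrank k ↥(A.N v ⊓ B.N v) : ℤ)) = _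
    exact_mod_cast this
  linear_combination σ v * h2

end Subrep

open Subrep in
/-- The first step `F 1` of a Harder–Narasimhan filtration dominates every nonzero
subrepresentation in slope: `μ(N) ≤ μ(F 1)` for all nonzero `N ⊆ M`, and if
`μ(N) = μ(F 1)` then `N ⊆ F 1`. -/
theorem first_step_maximal_destabilizing {k V E : Type} [Field k] [Fintype V]
    {M : V → Type}
    [∀ v, AddCommGroup (M v)] [∀ v, Module k (M v)] [∀ v, FiniteDimensional k (M v)]
    {src tgt : E → V} {f : ∀ e, M (src e) →ₗ[k] M (tgt e)}
    (Θ σ : V → ℤ) (hσ : ∀ v, 0 < σ v)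
    (n : ℕ) (F : ℕ → Subrep M src tgt f) (hF : IsHNFiltration Θ σ n F) :
    ∀ N : Subrep M src tgt f, N ≠ bot →
      slope Θ σ N ≤ slope Θ σ (F 1) ∧
      (slope Θ σ N = slope Θ σ (F 1) → N ≤ F 1) := by
  obtain ⟨hF0, hFtop, hlt, hdec, hss⟩ := hF
  set μ : ℚ := slope Θ σ (F 1) with hμdef
  have hμ0 : quotSlope Θ σ (F 0) (F 1) = μ := by
    rw [hF0]
    simp [quotSlope, Subrep.slope, tot_bot, hμdef]
  have hchain : ∀ i, i ≤ n → quotSlope Θ σ (F i) (F (i+1)) ≤ μ ∧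
      (1 ≤ i → quotSlope Θ σ (F i) (F (i+1)) < μ) := by
    intro i
    induction i with
    | zero => exact fun _ => ⟨le_of_eq hμ0, fun h => absurd h (by norm_num)⟩
    | succ j ih =>
      intro hj
      have h1 : quotSlope Θ σ (F (j+1)) (F (j+2)) < quotSlope Θ σ (F j) (F (j+1)) := hdec j hj
      have h2 := (ih (Nat.le_of_succ_le hj)).1
      exact ⟨(h1.trans_le h2).le, fun _ => h1.trans_le h2⟩
  intro N hN
  have key : ∀ i, i ≤ n + 1 →
      ((tot Θ (inf' N (F i)) : ℚ) ≤ μ * (tot σ (inf' N (F i)) : ℚ)) ∧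
      (((tot Θ (inf' N (F i)) : ℚ) = μ * (tot σ (inf' N (F i)) : ℚ)) → inf' N (F i) ≤ F 1) := by
    intro i
    induction i with
    | zero =>
      intro _
      rw [hF0]
      refine ⟨by rw [tot_inf'_bot, tot_inf'_bot]; norm_num, fun _ => ?_⟩
      exact (inf'_le_right N bot).trans (bot_le' (F 1))
    | succ j ih =>
      intro hj
      have hjn : j ≤ n := by omega
      have ihj := ih (by omega)
      have hAB : inf' N (F j) ≤ inf' N (F (j+1)) := inf'_mono_right (le_of_lt (hlt j hjn))
      by_cases hEq : inf' N (F j) = inf' N (F (j+1))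
      · exact hEq ▸ ihj
      · have hbpos : tot σ (inf' N (F j)) < tot σ (inf' N (F (j+1))) := tot_lt σ hσ hAB hEq
        have hFP : F j ≤ (inf' N (F (j+1))).sup (F j) := le_sup_right' _ _
        have hPF : (inf' N (F (j+1))).sup (F j) ≤ F (j+1) :=
          sup_le' (inf'_le_right N (F (j+1))) (le_of_lt (hlt j hjn))
        have hPne : (inf' N (F (j+1))).sup (F j) ≠ F j := by
          intro h
          apply hEq
          have hBFj : inf' N (F (j+1)) ≤ F j := (le_sup_left' _ _).trans (le_of_eq h)
          exact le_antisymm hAB (le_inf' (inf'_le_left N (F (j+1))) hBFj)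
        have hqs := hss j hjn _ hFP hPF hPne
        have hBFjA : (inf' N (F (j+1))).inf' (F j) = inf' N (F j) := by
          apply ext'
          intro v
          show (N.N v ⊓ (F (j+1)).N v) ⊓ (F j).N v = N.N v ⊓ (F j).N v
          rw [inf_assoc, inf_eq_right.2 (le_def'.1 (le_of_lt (hlt j hjn)) v)]
        have hmodΘ := tot_modular Θ (inf' N (F (j+1))) (F j)
        have hmodσ := tot_modular σ (inf' N (F (j+1))) (F j)
        rw [hBFjA] at hmodΘ hmodσ
        have e1 : tot Θ ((inf' N (F (j+1))).sup (F j)) - tot Θ (F j)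
            = tot Θ (inf' N (F (j+1))) - tot Θ (inf' N (F j)) := by linarith
        have e2 : tot σ ((inf' N (F (j+1))).sup (F j)) - tot σ (F j)
            = tot σ (inf' N (F (j+1))) - tot σ (inf' N (F j)) := by linarith
        rw [quotSlope, e1, e2] at hqs
        have hd : (0:ℚ) < ((tot σ (inf' N (F (j+1))) - tot σ (inf' N (F j)) : ℤ) : ℚ) := by
          exact_mod_cast Int.sub_pos.2 hbpos
        rw [div_le_iff₀ hd] at hqs
        have hμj := hchain j hjn
        have hstep : ((tot Θ (inf' N (F (j+1))) - tot Θ (inf' N (F j)) : ℤ) : ℚ) ≤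
            μ * ((tot σ (inf' N (F (j+1))) - tot σ (inf' N (F j)) : ℤ) : ℚ) :=
          hqs.trans (mul_le_mul_of_nonneg_right hμj.1 hd.le)
        have hcΘ : ((tot Θ (inf' N (F (j+1))) - tot Θ (inf' N (F j)) : ℤ) : ℚ)
            = (tot Θ (inf' N (F (j+1))) : ℚ) - (tot Θ (inf' N (F j)) : ℚ) := by push_cast; ring
        have hcσ : ((tot σ (inf' N (F (j+1))) - tot σ (inf' N (F j)) : ℤ) : ℚ)
            = (tot σ (inf' N (F (j+1))) : ℚ) - (tot σ (inf' N (F j)) : ℚ) := by push_cast; ring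
        constructor
        · rw [hcΘ, hcσ] at hstep
          nlinarith [ihj.1]
        · intro heq
          rcases Nat.eq_zero_or_pos j with hj0 | hj1
          · subst hj0
            exact inf'_le_right N (F 1)
          · exfalso
            have hlt' := hμj.2 hj1
            have hstep' : ((tot Θ (inf' N (F (j+1))) - tot Θ (inf' N (F j)) : ℤ) : ℚ) <
                μ * ((tot σ (inf' N (F (j+1))) - tot σ (inf' N (F j)) : ℤ) : ℚ) :=
              hqs.trans_lt (mul_lt_mul_of_pos_right hlt' hd)
            rw [hcΘ, hcσ] at hstep'
            nlinarith [ihj.1]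
  have hNtop : inf' N (F (n+1)) = N := by rw [hFtop (n+1) le_rfl]; exact inf'_top N
  have hk := key (n+1) le_rfl
  rw [hNtop] at hk
  have hSpos : (0:ℚ) < (tot σ N : ℚ) := by
    have := tot_lt σ hσ (bot_le' N) (fun h => hN h.symm)
    rw [tot_bot] at this
    exact_mod_cast this
  constructor
  · show slope Θ σ N ≤ μ
    rw [Subrep.slope, div_le_iff₀ hSpos]
    exact hk.1
  · intro h
    apply hk.2
    rw [show Subrep.slope Θ σ N = (tot Θ N : ℚ) / (tot σ N : ℚ) from rfl,
      div_eq_iff (ne_of_gt hSpos)] at h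
    linarith [h]
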